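/- Regard F as a map from the open set U = {x ∈ ℝ^n : I_n − W(x)ᵀΘ is invertible} into ℝ^n defined by the same formula F(x) = (I_n − Θ)(I_n − W(x)ᵀΘ)^{−1}(1/n)1_n. Then F is Fréchet differentiable at every x ∈ U (in particular at every point of the relative interior int Δ_n = {x > 0, 1ᵀx = 1}), and its Jacobian matrix at x equals (I_n − Θ)(I_n − W(x)ᵀΘ)^{−1}(I_n − Cᵀ)Θ(I_n − Θ)^{−1} diag(F(x)). -/

import Mathlib

open Matrix

/-- `W(x) = diag(x) + (I - diag(x)) C` -/
noncomputable def Wmat {n : ℕ} (C : Matrix (Fin n) (Fin n) ℝ) (x : Fin n → ℝ) :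
    Matrix (Fin n) (Fin n) ℝ :=
  Matrix.diagonal x + (1 - Matrix.diagonal x) * C

/-- `F(x) = (I - Θ)(I - W(x)ᵀΘ)⁻¹ (1/n) 1_n` -/
noncomputable def Fmap {n : ℕ} (C : Matrix (Fin n) (Fin n) ℝ) (θ : Fin n → ℝ)
    (x : Fin n → ℝ) : Fin n → ℝ :=
  ((1 - Matrix.diagonal θ) * (1 - (Wmat C x)ᵀ * Matrix.diagonal θ)⁻¹).mulVec
    (fun _ => 1 / (n : ℝ))

attribute [local instance] Matrix.linftyOpNormedRing Matrix.linftyOpNormedAlgebra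

theorem stmt3 (n : ℕ) (hn : 2 ≤ n) (C : Matrix (Fin n) (Fin n) ℝ)
    (hCnonneg : ∀ i j, 0 ≤ C i j) (hCrow : ∀ i, ∑ j, C i j = 1)
    (hCdiag : ∀ i, C i i = 0)
    (θ : Fin n → ℝ) (hθ0 : ∀ i, 0 ≤ θ i) (hθ1 : ∀ i, θ i < 1) (hθex : ∃ j, 0 < θ j)
    (x : Fin n → ℝ) (hx : IsUnit (1 - (Wmat C x)ᵀ * Matrix.diagonal θ)) :
    HasFDerivAt (Fmap C θ)
      (LinearMap.toContinuousLinearMap (Matrix.toLin'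
        ((1 - Matrix.diagonal θ) * (1 - (Wmat C x)ᵀ * Matrix.diagonal θ)⁻¹ *
          (1 - Cᵀ) * Matrix.diagonal θ * (1 - Matrix.diagonal θ)⁻¹ *
          Matrix.diagonal (Fmap C θ x)))) x := by
  haveI : CompleteSpace (Matrix (Fin n) (Fin n) ℝ) := FiniteDimensional.complete ℝ _
  set Θ : Matrix (Fin n) (Fin n) ℝ := Matrix.diagonal θ with hΘ
  set A : Matrix (Fin n) (Fin n) ℝ := 1 - (Wmat C x)ᵀ * Θ with hA
  set v : Fin n → ℝ := fun _ => 1 / (n : ℝ) with hv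
  -- the linear part of y ↦ A(y)
  let Lf : (Fin n → ℝ) →ₗ[ℝ] Matrix (Fin n) (Fin n) ℝ :=
    { toFun := fun h => (1 - Cᵀ) * Matrix.diagonal h * Θ
      map_add' := fun a b => by
        rw [show Matrix.diagonal (a + b) = Matrix.diagonal a + Matrix.diagonal b from
          (Matrix.diagonal_add a b).symm, Matrix.mul_add, Matrix.add_mul]
      map_smul' := fun c a => by
        rw [RingHom.id_apply, Matrix.diagonal_smul, Matrix.mul_smul, Matrix.smul_mul] }
  let L := LinearMap.toContinuousLinearMap Lf
  have hg : ∀ y : Fin n → ℝ, 1 - (Wmat C y)ᵀ * Θ = (1 - Cᵀ * Θ) - Lf y := by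
    intro y
    show _ = (1 - Cᵀ * Θ) - (1 - Cᵀ) * Matrix.diagonal y * Θ
    simp only [Wmat, Matrix.transpose_add, Matrix.transpose_mul, Matrix.transpose_sub,
      Matrix.transpose_one, Matrix.diagonal_transpose]
    noncomm_ring
  have hgd : HasFDerivAt (fun y => 1 - (Wmat C y)ᵀ * Θ) (-L) x := by
    have h0 : HasFDerivAt (fun y : Fin n → ℝ => (1 - Cᵀ * Θ) - Lf y) (-L) x := by
      exact L.hasFDerivAt.const_sub (1 - Cᵀ * Θ)
    exact h0.congr_of_eventuallyEq (Filter.Eventually.of_forall fun y => (hg y))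
  -- derivative of the inverse
  have hAu : (hx.unit : Matrix (Fin n) (Fin n) ℝ) = A := hx.unit_spec
  have hinv0 := hasFDerivAt_ringInverse (𝕜 := ℝ) hx.unit
  rw [hAu] at hinv0
  have hinv : HasFDerivAt (fun y => Ring.inverse (1 - (Wmat C y)ᵀ * Θ))
      ((-ContinuousLinearMap.mulLeftRight ℝ _ ↑hx.unit⁻¹ ↑hx.unit⁻¹).comp (-L)) x :=
    by have := hinv0.comp x hgd; exact this
  -- postcompose with the linear map M ↦ ((1 - Θ) * M) *ᵥ v
  let Pf : Matrix (Fin n) (Fin n) ℝ →ₗ[ℝ] (Fin n → ℝ) :=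
    { toFun := fun M => ((1 - Θ) * M).mulVec v
      map_add' := fun M N => by simp [Matrix.mul_add, Matrix.add_mulVec]
      map_smul' := fun c M => by simp [Matrix.mul_smul, Matrix.smul_mulVec] }
  let P := LinearMap.toContinuousLinearMap Pf
  have hFeq : Fmap C θ = fun y => P (Ring.inverse (1 - (Wmat C y)ᵀ * Θ)) := by
    funext y
    show _ = ((1 - Θ) * Ring.inverse (1 - (Wmat C y)ᵀ * Θ)).mulVec v
    rw [Fmap, Matrix.nonsing_inv_eq_ringInverse]
  have hF : HasFDerivAt (Fmap C θ)
      (P.comp ((-ContinuousLinearMap.mulLeftRight ℝ _ ↑hx.unit⁻¹ ↑hx.unit⁻¹).comp (-L))) x := by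
    rw [hFeq]
    exact P.hasFDerivAt.comp x hinv
  -- identify the derivative with the stated one
  convert hF using 1
  have hB : ((hx.unit⁻¹ : (Matrix (Fin n) (Fin n) ℝ)ˣ) : Matrix (Fin n) (Fin n) ℝ) = A⁻¹ := by
    rw [Matrix.nonsing_inv_eq_ringInverse]
    conv_rhs => rw [← hAu]
    rw [Ring.inverse_unit]
  refine ContinuousLinearMap.ext fun h => ?_
  simp only [ContinuousLinearMap.coe_comp', Function.comp_apply,
    ContinuousLinearMap.comp_apply,
    ContinuousLinearMap.neg_apply, LinearMap.coe_toContinuousLinearMap',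
    ContinuousLinearMap.mulLeftRight_apply, map_neg, neg_neg, hB]
  show _ = P ((-(ContinuousLinearMap.mulLeftRight ℝ (Matrix (Fin n) (Fin n) ℝ) A⁻¹ A⁻¹)) (-(L h)))
  simp only [ContinuousLinearMap.neg_apply, map_neg, neg_neg, ContinuousLinearMap.mulLeftRight_apply]
  show Matrix.toLin' _ h = Pf (A⁻¹ * Lf h * A⁻¹)
  rw [Matrix.toLin'_apply]
  show _ = ((1 - Θ) * (A⁻¹ * ((1 - Cᵀ) * Matrix.diagonal h * Θ) * A⁻¹)).mulVec v
  -- reorganize as nested mulVec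
  set w : Fin n → ℝ := A⁻¹.mulVec v with hw
  have hne : ∀ i, (1 : ℝ) - θ i ≠ 0 := fun i => sub_ne_zero.mpr (hθ1 i).ne'
  have hΘdiag : (1 : Matrix (Fin n) (Fin n) ℝ) - Θ = Matrix.diagonal (fun i => 1 - θ i) := by
    rw [hΘ, ← Matrix.diagonal_one]
    rw [show Matrix.diagonal (fun _ : Fin n => (1:ℝ)) - Matrix.diagonal θ
      = Matrix.diagonal (fun i => 1 - θ i) from Matrix.diagonal_sub _ _]
  have hΘinv : ((1 : Matrix (Fin n) (Fin n) ℝ) - Θ)⁻¹ =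
      Matrix.diagonal (fun i => (1 - θ i)⁻¹) := by
    rw [hΘdiag]
    refine Matrix.inv_eq_right_inv ?_
    have h1 : (fun i : Fin n => (1 - θ i) * (1 - θ i)⁻¹) = fun _ => (1 : ℝ) :=
      funext fun i => mul_inv_cancel₀ (hne i)
    simp only [Matrix.diagonal_mul_diagonal]
    rw [h1, Matrix.diagonal_one]
  have hFx : Fmap C θ x = fun i => (1 - θ i) * w i := by
    show ((1 - Θ) * (1 - (Wmat C x)ᵀ * Θ)⁻¹).mulVec v = _
    rw [← hA, ← Matrix.mulVec_mulVec, ← hw, hΘdiag]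
    funext i
    rw [Matrix.mulVec_diagonal]
  have hdiagmul : Θ * ((1 - Θ)⁻¹ * Matrix.diagonal (Fmap C θ x)) =
      Matrix.diagonal (fun i => θ i * w i) := by
    rw [hΘinv, hFx, hΘ]
    simp only [Matrix.diagonal_mul_diagonal]
    have h1 : (fun i : Fin n => θ i * ((1 - θ i)⁻¹ * ((1 - θ i) * w i))) =
        fun i => θ i * w i :=
      funext fun i => by rw [inv_mul_cancel_left₀ (hne i)]
    rw [h1]
  have hv2 : (Matrix.diagonal h * (Θ * A⁻¹)).mulVec v = fun i => θ i * w i * h i := by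
    rw [← Matrix.mulVec_mulVec, ← Matrix.mulVec_mulVec, ← hw, hΘ]
    funext i
    rw [Matrix.mulVec_diagonal, Matrix.mulVec_diagonal]
    ring
  have lhs : ((1 - Θ) * A⁻¹ * (1 - Cᵀ) * Θ * (1 - Θ)⁻¹ *
      Matrix.diagonal (Fmap C θ x)).mulVec h =
      ((1 - Θ) * A⁻¹ * (1 - Cᵀ)).mulVec (fun i => θ i * w i * h i) := by
    rw [show (1 - Θ) * A⁻¹ * (1 - Cᵀ) * Θ * (1 - Θ)⁻¹ * Matrix.diagonal (Fmap C θ x)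
        = (1 - Θ) * A⁻¹ * (1 - Cᵀ) * (Θ * ((1 - Θ)⁻¹ * Matrix.diagonal (Fmap C θ x)))
      by noncomm_ring]
    rw [hdiagmul, ← Matrix.mulVec_mulVec]
    have h1 : (Matrix.diagonal fun i => θ i * w i) *ᵥ h = fun i => θ i * w i * h i :=
      funext fun i => Matrix.mulVec_diagonal _ _ _
    rw [h1]
  have rhs : ((1 - Θ) * (A⁻¹ * ((1 - Cᵀ) * Matrix.diagonal h * Θ) * A⁻¹)).mulVec v =
      ((1 - Θ) * A⁻¹ * (1 - Cᵀ)).mulVec (fun i => θ i * w i * h i) := by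
    rw [show (1 - Θ) * (A⁻¹ * ((1 - Cᵀ) * Matrix.diagonal h * Θ) * A⁻¹)
        = (1 - Θ) * A⁻¹ * (1 - Cᵀ) * (Matrix.diagonal h * (Θ * A⁻¹)) by noncomm_ring]
    rw [← Matrix.mulVec_mulVec, hv2]
  rw [lhs, rhs]
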